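/- Let ξ₁, ..., ξ_n be nonnegative random variables such that for some λ > 0 and M ∈ (0,1), the conditional bound E[exp(-λ ξ_k) | ξ₁,...,ξ_{k-1}] ≤ M holds almost surely for every k = 1,...,n. Then for any T > 0, P(ξ₁ + ... + ξ_n < T) ≤ exp(λT) · Mⁿ. -/

import Mathlib

open MeasureTheory

theorem key {Ω : Type*} [MeasurableSpace Ω] (P : Measure Ω) [IsProbabilityMeasure P]
    (n : ℕ) (ξ : Fin n → Ω → ℝ) (hmeas : ∀ k, Measurable (ξ k))
    (hnonneg : ∀ k ω, 0 ≤ ξ k ω)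
    (lam M : ℝ) (hlam : 0 < lam) (hM0 : 0 < M)
    (hcond : ∀ k : Fin n,
      P[fun ω => Real.exp (-lam * ξ k ω) |
        MeasurableSpace.comap (fun ω (i : {i : Fin n // i < k}) => ξ i.1 ω) inferInstance]
        ≤ᵐ[P] fun _ => M) :
    ∀ m, m ≤ n → (∫ ω, ∏ k ∈ Finset.univ.filter (fun k : Fin n => (k : ℕ) < m),
      Real.exp (-lam * ξ k ω) ∂P) ≤ M ^ m := by
  intro m
  induction m with
  | zero =>
    intro _
    simp
  | succ m ih =>
    intro hm
    have hmn : m < n := hm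
    set km : Fin n := ⟨m, hmn⟩ with hkm
    set F : Ω → ℝ := fun ω => ∏ k ∈ Finset.univ.filter (fun k : Fin n => (k : ℕ) < m),
      Real.exp (-lam * ξ k ω) with hF
    set g : Ω → ℝ := fun ω => Real.exp (-lam * ξ km ω) with hg
    -- basic bounds
    have hF0 : ∀ ω, 0 ≤ F ω := fun ω =>
      Finset.prod_nonneg fun k _ => (Real.exp_pos _).le
    have hexp_le_one : ∀ (k : Fin n) ω, Real.exp (-lam * ξ k ω) ≤ 1 := by
      intro k ω
      rw [Real.exp_le_one_iff]
      have := mul_nonneg hlam.le (hnonneg k ω)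
      nlinarith
    have hF1 : ∀ ω, F ω ≤ 1 := fun ω =>
      Finset.prod_le_one (fun k _ => (Real.exp_pos _).le) (fun k _ => hexp_le_one k ω)
    have hg0 : ∀ ω, 0 ≤ g ω := fun ω => (Real.exp_pos _).le
    have hg1 : ∀ ω, g ω ≤ 1 := fun ω => hexp_le_one km ω
    -- measurability
    have hFmeas : Measurable F := by
      apply Finset.measurable_prod
      intro k _
      exact (Real.continuous_exp.measurable).comp ((hmeas k).const_mul _)
    have hgmeas : Measurable g := (Real.continuous_exp.measurable).comp ((hmeas km).const_mul _)
    -- split the product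
    have hsplit : (Finset.univ.filter (fun k : Fin n => (k : ℕ) < m + 1))
        = insert km (Finset.univ.filter (fun k : Fin n => (k : ℕ) < m)) := by
      ext k
      simp [Nat.lt_succ_iff_lt_or_eq, Fin.ext_iff, hkm, or_comm]
      omega
    have hnotmem : km ∉ Finset.univ.filter (fun k : Fin n => (k : ℕ) < m) := by simp [hkm]
    have hprod : ∀ ω, (∏ k ∈ Finset.univ.filter (fun k : Fin n => (k : ℕ) < m + 1),
        Real.exp (-lam * ξ k ω)) = F ω * g ω := by
      intro ω
      rw [hsplit, Finset.prod_insert hnotmem, mul_comm]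
    have h𝒢 : MeasurableSpace.comap (fun ω (i : {i : Fin n // i < km}) => ξ i.1 ω)
        inferInstance ≤ ‹MeasurableSpace Ω› := by
      have hmap : Measurable (fun ω (i : {i : Fin n // i < km}) => ξ i.1 ω) :=
        measurable_pi_lambda _ fun i => hmeas i.1
      exact MeasurableSpace.comap_le_iff_le_map.mpr hmap.le_map
    -- F is measurable w.r.t. the comap σ-algebra
    have hF_meas : StronglyMeasurable[MeasurableSpace.comap
        (fun ω (i : {i : Fin n // i < km}) => ξ i.1 ω) inferInstance] F := by
      apply Finset.stronglyMeasurable_fun_prod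
      intro k hk
      have hk' : k < km := by simpa [hkm, Fin.lt_def] using hk
      have hpi : Measurable[MeasurableSpace.comap
          (fun ω (i : {i : Fin n // i < km}) => ξ i.1 ω) inferInstance]
          (fun ω (i : {i : Fin n // i < km}) => ξ i.1 ω) :=
        Measurable.of_comap_le le_rfl
      have hxi : Measurable[MeasurableSpace.comap
          (fun ω (i : {i : Fin n // i < km}) => ξ i.1 ω) inferInstance] (ξ k) :=
        (measurable_pi_apply (⟨k, hk'⟩ : {i : Fin n // i < km})).comp hpi
      exact ((Real.continuous_exp.measurable).comp (hxi.const_mul _)).stronglyMeasurable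
    -- integrability
    have hint_of_bdd : ∀ (f : Ω → ℝ), Measurable f → (∀ ω, 0 ≤ f ω) → (∀ ω, f ω ≤ 1) →
        Integrable f P := by
      intro f hfm hf0 hf1
      refine (integrable_const (1 : ℝ)).mono' hfm.aestronglyMeasurable ?_
      filter_upwards with ω
      rw [Real.norm_eq_abs, abs_of_nonneg (hf0 ω)]
      exact hf1 ω
    have hFint : Integrable F P := hint_of_bdd F hFmeas hF0 hF1
    have hgint : Integrable g P := hint_of_bdd g hgmeas hg0 hg1
    have hFgint : Integrable (F * g) P :=
      hint_of_bdd (F * g) (hFmeas.mul hgmeas)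
        (fun ω => mul_nonneg (hF0 ω) (hg0 ω))
        (fun ω => mul_le_one₀ (hF1 ω) (hg0 ω) (hg1 ω))
    -- pull-out property
    have hpull : P[F * g | MeasurableSpace.comap
          (fun ω (i : {i : Fin n // i < km}) => ξ i.1 ω) inferInstance]
        =ᵐ[P] F * P[g | MeasurableSpace.comap
          (fun ω (i : {i : Fin n // i < km}) => ξ i.1 ω) inferInstance] := by
      refine condExp_stronglyMeasurable_mul_of_bound h𝒢 hF_meas hgint 1 ?_
      filter_upwards with ω
      rw [Real.norm_eq_abs, abs_of_nonneg (hF0 ω)]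
      exact hF1 ω
    have hcondP : Integrable (P[g | MeasurableSpace.comap
        (fun ω (i : {i : Fin n // i < km}) => ξ i.1 ω) inferInstance]) P :=
      integrable_condExp
    -- chain of inequalities
    calc (∫ ω, ∏ k ∈ Finset.univ.filter (fun k : Fin n => (k : ℕ) < m + 1),
          Real.exp (-lam * ξ k ω) ∂P)
        = ∫ ω, (F * g) ω ∂P := by
          refine integral_congr_ae (Filter.Eventually.of_forall fun ω => ?_)
          exact hprod ω
      _ = ∫ ω, (P[F * g | MeasurableSpace.comap
            (fun ω (i : {i : Fin n // i < km}) => ξ i.1 ω) inferInstance]) ω ∂P :=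
          (integral_condExp h𝒢).symm
      _ = ∫ ω, F ω * (P[g | MeasurableSpace.comap
            (fun ω (i : {i : Fin n // i < km}) => ξ i.1 ω) inferInstance]) ω ∂P :=
          integral_congr_ae hpull
      _ ≤ ∫ ω, F ω * M ∂P := by
          have hbd : ∀ᵐ ω ∂P, ‖F ω‖ ≤ 1 := by
            filter_upwards with ω
            rw [Real.norm_eq_abs, abs_of_nonneg (hF0 ω)]
            exact hF1 ω
          refine integral_mono_ae (hcondP.bdd_mul hFmeas.aestronglyMeasurable hbd)
            (hFint.mul_const M) ?_
          filter_upwards [hcond km] with ω hω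
          exact mul_le_mul_of_nonneg_left hω (hF0 ω)
      _ = M * ∫ ω, F ω ∂P := by rw [integral_mul_const]; ring
      _ ≤ M * M ^ m := mul_le_mul_of_nonneg_left (ih (le_of_lt hmn)) hM0.le
      _ = M ^ (m + 1) := by ring

/-- If nonnegative random variables `ξ₁,...,ξ_n` satisfy the conditional Laplace bound
`E[exp(-λ ξ_k) | ξ₁,...,ξ_{k-1}] ≤ M` a.s. for every `k`, with `λ > 0`, `M ∈ (0,1)`, then
`P(ξ₁ + ... + ξ_n < T) ≤ exp(λT) Mⁿ` for every `T > 0`. -/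
theorem stmt_5 {Ω : Type*} [MeasurableSpace Ω] (P : Measure Ω) [IsProbabilityMeasure P]
    (n : ℕ) (ξ : Fin n → Ω → ℝ) (hmeas : ∀ k, Measurable (ξ k))
    (hnonneg : ∀ k ω, 0 ≤ ξ k ω)
    (lam M T : ℝ) (hlam : 0 < lam) (hM0 : 0 < M) (hM1 : M < 1) (hT : 0 < T)
    (hcond : ∀ k : Fin n,
      P[fun ω => Real.exp (-lam * ξ k ω) |
        MeasurableSpace.comap (fun ω (i : {i : Fin n // i < k}) => ξ i.1 ω) inferInstance]
        ≤ᵐ[P] fun _ => M) :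
    P {ω | ∑ k, ξ k ω < T} ≤ ENNReal.ofReal (Real.exp (lam * T) * M ^ n) := by
  set f : Ω → ℝ := fun ω => Real.exp (-lam * ∑ k, ξ k ω) with hf
  have hfull : (Finset.univ.filter (fun k : Fin n => (k : ℕ) < n)) = (Finset.univ : Finset (Fin n)) := by
    ext k; simp [k.isLt]
  have hfprod : ∀ ω, f ω = ∏ k ∈ Finset.univ.filter (fun k : Fin n => (k : ℕ) < n),
      Real.exp (-lam * ξ k ω) := by
    intro ω
    rw [hfull]
    show Real.exp (-lam * ∑ k, ξ k ω) = _
    rw [Finset.mul_sum, Real.exp_sum]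
  have hint : (∫ ω, f ω ∂P) ≤ M ^ n := by
    have := key P n ξ hmeas hnonneg lam M hlam hM0 hcond n le_rfl
    calc (∫ ω, f ω ∂P) = _ := integral_congr_ae (Filter.Eventually.of_forall hfprod)
      _ ≤ M ^ n := this
  have hfmeas : Measurable f := by
    apply Real.continuous_exp.measurable.comp
    exact (Finset.measurable_sum Finset.univ fun k _ => hmeas k).const_mul _
  have hfint : Integrable f P := by
    refine (integrable_const (1 : ℝ)).mono' hfmeas.aestronglyMeasurable ?_
    filter_upwards with ω
    rw [Real.norm_eq_abs, abs_of_nonneg (Real.exp_pos _).le, Real.exp_le_one_iff]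
    have : 0 ≤ ∑ k, ξ k ω := Finset.sum_nonneg fun k _ => hnonneg k ω
    nlinarith
  -- Markov
  have hmarkov := mul_meas_ge_le_integral_of_nonneg
    (Filter.Eventually.of_forall fun ω => (Real.exp_pos (-lam * ∑ k, ξ k ω)).le) hfint
    (Real.exp (-lam * T))
  have hsub : {ω | ∑ k, ξ k ω < T} ⊆ {ω | Real.exp (-lam * T) ≤ f ω} := by
    intro ω hω
    simp only [Set.mem_setOf_eq] at hω ⊢
    rw [hf, Real.exp_le_exp]
    nlinarith
  have hle : P {ω | ∑ k, ξ k ω < T} ≤ P {ω | Real.exp (-lam * T) ≤ f ω} := measure_mono hsub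
  have htoReal : (P {ω | ∑ k, ξ k ω < T}).toReal ≤ Real.exp (lam * T) * M ^ n := by
    have h1 : (P {ω | ∑ k, ξ k ω < T}).toReal ≤ (P {ω | Real.exp (-lam * T) ≤ f ω}).toReal :=
      ENNReal.toReal_mono (measure_ne_top _ _) hle
    have hε : (0:ℝ) < Real.exp (-lam * T) := Real.exp_pos _
    have h2 : (P {ω | Real.exp (-lam * T) ≤ f ω}).toReal ≤ Real.exp (lam * T) * M ^ n := by
      calc (P {ω | Real.exp (-lam * T) ≤ f ω}).toReal
          ≤ (∫ ω, f ω ∂P) / Real.exp (-lam * T) := by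
            rw [le_div_iff₀ hε]
            calc (P {ω | Real.exp (-lam * T) ≤ f ω}).toReal * Real.exp (-lam * T)
                = Real.exp (-lam * T) * (P {ω | Real.exp (-lam * T) ≤ f ω}).toReal := by ring
              _ ≤ ∫ ω, f ω ∂P := hmarkov
        _ ≤ M ^ n / Real.exp (-lam * T) := by
            gcongr
        _ = Real.exp (lam * T) * M ^ n := by
            rw [div_eq_mul_inv, ← Real.exp_neg]
            ring_nf
    exact h1.trans h2
  calc P {ω | ∑ k, ξ k ω < T}
      = ENNReal.ofReal (P {ω | ∑ k, ξ k ω < T}).toReal :=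
        (ENNReal.ofReal_toReal (measure_ne_top _ _)).symm
    _ ≤ ENNReal.ofReal (Real.exp (lam * T) * M ^ n) := ENNReal.ofReal_le_ofReal htoReal
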